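/- Let H be a real Hilbert space, b ∈ H, and M ≥ 0. Let m be a Borel measure on H with m({0}) = 0 and ∫_H ‖ξ‖² dm(ξ) < ∞. Let u, v ∈ H satisfy ‖u‖ ≤ M and ‖v‖ ≤ M, and suppose that for m-almost every ξ one has ⟨ξ, u⟩ ≥ 0 and ⟨ξ, v⟩ ≥ 0. Define F(w) := ⟨b, w⟩ − ∫_H (e^{−⟨ξ,w⟩} − 1 + ⟨χ(ξ), w⟩) dm(ξ) for w ∈ {u, v}. Then both integrals are absolutely convergent and |F(u) − F(v)| ≤ (‖b‖ + (M + 1)·∫_H ‖ξ‖² dm(ξ))·‖u − v‖. -/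

import Mathlib

open MeasureTheory
open scoped RealInnerProductSpace

lemma exp_neg_le_quad {t : ℝ} (ht : 0 ≤ t) : Real.exp (-t) ≤ 1 - t + t ^ 2 / 2 := by
  have key : MonotoneOn (fun y : ℝ => 1 - y + y ^ 2 / 2 - Real.exp (-y)) (Set.Ici 0) := by
    have hd : ∀ x : ℝ, HasDerivAt (fun y : ℝ => 1 - y + y ^ 2 / 2 - Real.exp (-y))
        (-1 + x + Real.exp (-x)) x := by
      intro x
      have h1 : HasDerivAt (fun y : ℝ => Real.exp (-y)) (-Real.exp (-x)) x := by
        simpa [Function.comp_def] using ((Real.hasDerivAt_exp (-x)).comp x ((hasDerivAt_id x).neg))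
      have h2 : HasDerivAt (fun y : ℝ => 1 - y + y ^ 2 / 2) (-1 + x) x := by
        have : HasDerivAt (fun y : ℝ => 1 - y + y ^ 2 / 2) (0 - 1 + (2 * x ^ 1 ) / 2) x := by
          exact (((hasDerivAt_const x (1:ℝ)).sub (hasDerivAt_id x)).add
            (((hasDerivAt_pow 2 x)).div_const 2))
        simpa using this
      simpa [Pi.sub_def] using h2.sub h1
    apply monotoneOn_of_deriv_nonneg (convex_Ici 0)
    · exact (Continuous.continuousOn (by continuity))
    · intro x hx
      exact (hd x).differentiableAt.differentiableWithinAt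
    · intro x hx
      rw [(hd x).deriv]
      have := Real.add_one_le_exp (-x)
      linarith
  have h0 := key (Set.self_mem_Ici) (Set.mem_Ici.2 ht) ht
  simp at h0
  linarith

lemma abs_quad {t : ℝ} (ht : 0 ≤ t) : |Real.exp (-t) - 1 + t| ≤ t ^ 2 / 2 := by
  have h1 := Real.add_one_le_exp (-t)
  have h2 := exp_neg_le_quad ht
  rw [abs_le]
  constructor <;> nlinarith

lemma lip_aux {s t : ℝ} (hs : 0 ≤ s) (hst : s ≤ t) :
    |(Real.exp (-s) + s) - (Real.exp (-t) + t)| ≤ t * (t - s) := by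
  have ht : 0 ≤ t := hs.trans hst
  have hd : 0 ≤ t - s := by linarith
  have hexp : Real.exp (-t) = Real.exp (-s) * Real.exp (-(t - s)) := by
    rw [← Real.exp_add]; ring_nf
  have h1 := Real.add_one_le_exp (-(t - s))
  have h2 := exp_neg_le_quad hd
  have h3 : Real.exp (-s) ≤ 1 := Real.exp_le_one_iff.mpr (by linarith)
  have h4 := Real.add_one_le_exp (-s)
  have h5 := (Real.exp_pos (-s)).le
  have hA : Real.exp (-t) ≤ Real.exp (-s) * (1 - (t - s) + (t - s) ^ 2 / 2) := by
    rw [hexp]; exact mul_le_mul_of_nonneg_left h2 h5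
  have hB : Real.exp (-s) * (1 - (t - s)) ≤ Real.exp (-t) := by
    rw [hexp]; exact mul_le_mul_of_nonneg_left (by linarith) h5
  rw [abs_le]
  constructor
  · nlinarith [mul_le_mul_of_nonneg_right h4 hd, mul_le_mul_of_nonneg_left h3 hd,
      mul_nonneg hd hd, sq_nonneg (t - s), mul_le_mul_of_nonneg_right h3 (mul_nonneg hd hd)]
  · nlinarith [mul_le_mul_of_nonneg_right h3 hd, mul_nonneg ht hd]

lemma lip_abs {s t : ℝ} (hs : 0 ≤ s) (ht : 0 ≤ t) :
    |(Real.exp (-s) + s) - (Real.exp (-t) + t)| ≤ max s t * |s - t| := by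
  rcases le_total s t with h | h
  · rw [max_eq_right h, abs_of_nonpos (by linarith : s - t ≤ 0)]
    simpa using lip_aux hs h
  · rw [max_eq_left h, abs_of_nonneg (by linarith : 0 ≤ s - t), abs_sub_comm]
    simpa using lip_aux ht h

lemma exp_abs_lip {s t : ℝ} (hs : 0 ≤ s) (ht : 0 ≤ t) :
    |Real.exp (-s) - Real.exp (-t)| ≤ |s - t| := by
  wlog h : s ≤ t generalizing s t
  · rw [abs_sub_comm, abs_sub_comm s t]; exact this ht hs (le_of_not_ge h)
  have hd : 0 ≤ t - s := by linarith
  have hexp : Real.exp (-t) = Real.exp (-s) * Real.exp (-(t - s)) := by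
    rw [← Real.exp_add]; ring_nf
  have h1 := Real.add_one_le_exp (-(t - s))
  have h3 : Real.exp (-s) ≤ 1 := Real.exp_le_one_iff.mpr (by linarith)
  have h5 := (Real.exp_pos (-s)).le
  have h6 : Real.exp (-(t - s)) ≤ 1 := Real.exp_le_one_iff.mpr (by linarith)
  rw [abs_of_nonpos (by linarith : s - t ≤ 0), abs_of_nonneg]
  · nlinarith [mul_le_mul_of_nonneg_left h1 h5]
  · nlinarith [mul_le_mul_of_nonneg_left h6 h5]

theorem stmt_0 {H : Type*} [NormedAddCommGroup H] [InnerProductSpace ℝ H] [CompleteSpace H]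
    [MeasurableSpace H] [BorelSpace H]
    (b : H) (M : ℝ) (hM : 0 ≤ M)
    (m : Measure H) (hm0 : m {0} = 0)
    (hm2 : Integrable (fun ξ : H => ‖ξ‖ ^ 2) m)
    (u v : H) (hu : ‖u‖ ≤ M) (hv : ‖v‖ ≤ M)
    (hpu : ∀ᵐ ξ ∂m, 0 ≤ ⟪ξ, u⟫) (hpv : ∀ᵐ ξ ∂m, 0 ≤ ⟪ξ, v⟫) :
    Integrable (fun ξ : H =>
        Real.exp (-⟪ξ, u⟫) - 1 + ⟪(if ‖ξ‖ ≤ 1 then ξ else 0), u⟫) m ∧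
    Integrable (fun ξ : H =>
        Real.exp (-⟪ξ, v⟫) - 1 + ⟪(if ‖ξ‖ ≤ 1 then ξ else 0), v⟫) m ∧
    |(⟪b, u⟫ - ∫ ξ, (Real.exp (-⟪ξ, u⟫) - 1 + ⟪(if ‖ξ‖ ≤ 1 then ξ else 0), u⟫) ∂m)
      - (⟪b, v⟫ - ∫ ξ, (Real.exp (-⟪ξ, v⟫) - 1 + ⟪(if ‖ξ‖ ≤ 1 then ξ else 0), v⟫) ∂m)|
      ≤ (‖b‖ + (M + 1) * ∫ ξ, ‖ξ‖ ^ 2 ∂m) * ‖u - v‖ := by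
  have hmeas : ∀ w : H, AEStronglyMeasurable (fun ξ : H =>
      Real.exp (-⟪ξ, w⟫) - 1 + ⟪(if ‖ξ‖ ≤ 1 then ξ else 0), w⟫) m := by
    intro w
    have heq : (fun ξ : H => Real.exp (-⟪ξ, w⟫) - 1 + ⟪(if ‖ξ‖ ≤ 1 then ξ else 0), w⟫)
        = fun ξ : H => Real.exp (-⟪ξ, w⟫) - 1 +
            Set.indicator {ξ : H | ‖ξ‖ ≤ 1} (fun ξ => ⟪ξ, w⟫) ξ := by
      funext ξ
      by_cases h : ‖ξ‖ ≤ 1 <;> simp [Set.indicator, h]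
    rw [heq]
    have hc : Continuous fun ξ : H => ⟪ξ, w⟫ := continuous_id.inner continuous_const
    have hset : MeasurableSet {ξ : H | ‖ξ‖ ≤ 1} :=
      (isClosed_le continuous_norm continuous_const).measurableSet
    exact ((((Real.continuous_exp.comp hc.neg).stronglyMeasurable).sub
      stronglyMeasurable_const).add (hc.stronglyMeasurable.indicator hset)).aestronglyMeasurable
  have hint : ∀ w : H, ‖w‖ ≤ M → (∀ᵐ ξ ∂m, 0 ≤ ⟪ξ, w⟫) →
      Integrable (fun ξ : H =>
        Real.exp (-⟪ξ, w⟫) - 1 + ⟪(if ‖ξ‖ ≤ 1 then ξ else 0), w⟫) m := by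
    intro w hw hpw
    refine Integrable.mono' (hm2.const_mul (M ^ 2 / 2 + 1)) (hmeas w) ?_
    filter_upwards [hpw] with ξ hξ
    rw [Real.norm_eq_abs]
    have hip : |⟪ξ, w⟫| ≤ ‖ξ‖ * M :=
      (abs_real_inner_le_norm ξ w).trans
        (mul_le_mul_of_nonneg_left hw (norm_nonneg ξ))
    by_cases h : ‖ξ‖ ≤ 1
    · rw [if_pos h]
      have := abs_quad hξ
      have h2 : ⟪ξ, w⟫ ≤ ‖ξ‖ * M := (le_abs_self _).trans hip
      nlinarith [norm_nonneg ξ, sq_nonneg (‖ξ‖ * M), abs_nonneg ⟪ξ, w⟫]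
    · rw [if_neg h, inner_zero_left, add_zero]
      push_neg at h
      have h1 : Real.exp (-⟪ξ, w⟫) ≤ 1 := Real.exp_le_one_iff.mpr (by linarith)
      have h2 := (Real.exp_pos (-⟪ξ, w⟫)).le
      rw [abs_of_nonpos (by linarith)]
      nlinarith
  have Iu := hint u hu hpu
  have Iv := hint v hv hpv
  refine ⟨Iu, Iv, ?_⟩
  set gu : H → ℝ := fun ξ => Real.exp (-⟪ξ, u⟫) - 1 + ⟪(if ‖ξ‖ ≤ 1 then ξ else 0), u⟫ with hgu
  set gv : H → ℝ := fun ξ => Real.exp (-⟪ξ, v⟫) - 1 + ⟪(if ‖ξ‖ ≤ 1 then ξ else 0), v⟫ with hgv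
  have hI2 : 0 ≤ ∫ ξ, ‖ξ‖ ^ 2 ∂m := integral_nonneg fun ξ => sq_nonneg _
  have hdiff : ∀ᵐ ξ ∂m, ‖gu ξ - gv ξ‖ ≤ ((M + 1) * ‖u - v‖) * ‖ξ‖ ^ 2 := by
    filter_upwards [hpu, hpv] with ξ hs ht
    rw [Real.norm_eq_abs]
    have hst : |⟪ξ, u⟫ - ⟪ξ, v⟫| ≤ ‖ξ‖ * ‖u - v‖ := by
      rw [← inner_sub_right]
      exact abs_real_inner_le_norm ξ (u - v)
    have hnuv := norm_nonneg (u - v)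
    have hnξ := norm_nonneg ξ
    by_cases h : ‖ξ‖ ≤ 1
    · have hrw : gu ξ - gv ξ =
          (Real.exp (-⟪ξ, u⟫) + ⟪ξ, u⟫) - (Real.exp (-⟪ξ, v⟫) + ⟪ξ, v⟫) := by
        simp only [hgu, hgv, if_pos h]; ring
      rw [hrw]
      have hmax : max ⟪ξ, u⟫ ⟪ξ, v⟫ ≤ ‖ξ‖ * M := by
        apply max_le
        · exact (le_abs_self _).trans ((abs_real_inner_le_norm ξ u).trans
            (mul_le_mul_of_nonneg_left hu hnξ))
        · exact (le_abs_self _).trans ((abs_real_inner_le_norm ξ v).trans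
            (mul_le_mul_of_nonneg_left hv hnξ))
      calc |(Real.exp (-⟪ξ, u⟫) + ⟪ξ, u⟫) - (Real.exp (-⟪ξ, v⟫) + ⟪ξ, v⟫)|
          ≤ max ⟪ξ, u⟫ ⟪ξ, v⟫ * |⟪ξ, u⟫ - ⟪ξ, v⟫| := lip_abs hs ht
        _ ≤ (‖ξ‖ * M) * (‖ξ‖ * ‖u - v‖) :=
            mul_le_mul hmax hst (abs_nonneg _) (by positivity)
        _ ≤ ((M + 1) * ‖u - v‖) * ‖ξ‖ ^ 2 := by nlinarith [mul_nonneg (mul_nonneg hnξ hnξ) hnuv]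
    · push_neg at h
      have hrw : gu ξ - gv ξ = Real.exp (-⟪ξ, u⟫) - Real.exp (-⟪ξ, v⟫) := by
        simp only [hgu, hgv, if_neg (not_le.mpr h), inner_zero_left, add_zero]
        ring
      rw [hrw]
      calc |Real.exp (-⟪ξ, u⟫) - Real.exp (-⟪ξ, v⟫)|
          ≤ |⟪ξ, u⟫ - ⟪ξ, v⟫| := exp_abs_lip hs ht
        _ ≤ ‖ξ‖ * ‖u - v‖ := hst
        _ ≤ ((M + 1) * ‖u - v‖) * ‖ξ‖ ^ 2 := by
            nlinarith [mul_nonneg (mul_nonneg hnξ (by linarith : (0:ℝ) ≤ ‖ξ‖ - 1)) hnuv, mul_nonneg (mul_nonneg hM (sq_nonneg ‖ξ‖)) hnuv]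
  have hY : |∫ ξ, (gu ξ - gv ξ) ∂m| ≤ ((M + 1) * ‖u - v‖) * ∫ ξ, ‖ξ‖ ^ 2 ∂m := by
    rw [← Real.norm_eq_abs, ← integral_const_mul]
    exact norm_integral_le_of_norm_le (hm2.const_mul _) hdiff
  have hX : |⟪b, u - v⟫| ≤ ‖b‖ * ‖u - v‖ := abs_real_inner_le_norm b (u - v)
  have hsplit : (⟪b, u⟫ - ∫ ξ, gu ξ ∂m) - (⟪b, v⟫ - ∫ ξ, gv ξ ∂m)
      = ⟪b, u - v⟫ - ∫ ξ, (gu ξ - gv ξ) ∂m := by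
    rw [integral_sub Iu Iv, inner_sub_right]; ring
  rw [hsplit]
  calc |⟪b, u - v⟫ - ∫ ξ, (gu ξ - gv ξ) ∂m|
      ≤ |⟪b, u - v⟫| + |∫ ξ, (gu ξ - gv ξ) ∂m| := abs_sub _ _
    _ ≤ ‖b‖ * ‖u - v‖ + ((M + 1) * ‖u - v‖) * ∫ ξ, ‖ξ‖ ^ 2 ∂m := add_le_add hX hY
    _ = (‖b‖ + (M + 1) * ∫ ξ, ‖ξ‖ ^ 2 ∂m) * ‖u - v‖ := by ring
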